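/- (Modulational expansion of the coefficient I.) Let g > 0, k₀ > 0, and χⱼ = (λⱼ, μⱼ) ∈ ℝ², j = 1,…,4, be fixed. Substitute k₁ = (k₀,0)+εχ₁, k₂ = (k₀,0)+εχ₂, k₃ = −((k₀,0)+εχ₃), k₄ = −((k₀,0)+εχ₄) into the coefficient I(k₁,k₂,k₃,k₄). Then, as ε → 0⁺, I = (√2 − 1)·(k₀³/(16π²))·( 1 + (3ε/(4k₀))(λ₁+λ₂+λ₃+λ₄) ) + O(ε²). -/

import Mathlib

open Asymptotics Filter Topology

/-- Euclidean norm on ℝ². -/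
noncomputable def norm2 (k : ℝ × ℝ) : ℝ := Real.sqrt (k.1 ^ 2 + k.2 ^ 2)

/-- Euclidean inner product on ℝ². -/
def dot (a b : ℝ × ℝ) : ℝ := a.1 * b.1 + a.2 * b.2

/-- Deep-water dispersion relation ω(k) = √(g‖k‖). -/
noncomputable def omg (g : ℝ) (k : ℝ × ℝ) : ℝ := Real.sqrt (g * norm2 k)

/-- ℓ_a^b = (‖a‖‖b‖ + a·b)/√(‖a‖‖b‖). -/
noncomputable def ell (a b : ℝ × ℝ) : ℝ :=
  (norm2 a * norm2 b + dot a b) / Real.sqrt (norm2 a * norm2 b)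

/-- The coefficient I of Proposition 4.3. -/
noncomputable def coefI (g : ℝ) (k₁ k₂ k₃ k₄ : ℝ × ℝ) : ℝ :=
  Real.sqrt g / (128 * Real.pi ^ 2) *
    (norm2 k₁ * norm2 k₂ * norm2 k₃ * norm2 k₄ * norm2 (k₁ + k₂) * norm2 (k₃ + k₄)) ^
      ((1 : ℝ) / 4) *
    (ell k₁ k₂ + ell (k₁ + k₂) (-k₁) + ell (k₁ + k₂) (-k₂)) *
    (ell k₃ k₄ + ell (k₃ + k₄) (-k₃) + ell (k₃ + k₄) (-k₄)) *
    (1 / (omg g k₁ + omg g k₂ + omg g (k₁ + k₂))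
      + 1 / (omg g k₃ + omg g k₄ + omg g (k₃ + k₄)))

open Set in
lemma taylor2_bigO {f : ℝ → ℝ} {a b : ℝ} (hf : ContDiffAt ℝ 2 f 0)
    (h0 : f 0 = a) (h1 : deriv f 0 = b) :
    (fun ε : ℝ => f ε - (a + b * ε)) =O[𝓝[>] (0:ℝ)] fun ε => ε ^ 2 := by
  obtain ⟨u, hu, hfu⟩ := hf.contDiffOn (le_refl 2) (by norm_num)
  obtain ⟨δ, hδ, hsub⟩ := Metric.mem_nhds_iff.mp hu
  have hδ2 : (0:ℝ) < δ/2 := by linarith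
  have hIcc : Icc (0:ℝ) (δ/2) ⊆ u := by
    intro x hx
    apply hsub
    simp only [Metric.mem_ball, Real.dist_eq, sub_zero]
    rw [abs_of_nonneg hx.1]; linarith [hx.2]
  have hfI : ContDiffOn ℝ 2 f (Icc 0 (δ/2)) := hfu.mono hIcc
  have hfI' : ContDiffOn ℝ ((1:ℕ)+1) f (Icc 0 (δ/2)) := by exact_mod_cast hfI
  obtain ⟨C, hC⟩ := exists_taylor_mean_remainder_bound (le_of_lt hδ2) hfI'
  rw [isBigO_iff]
  refine ⟨C, ?_⟩
  have hmem : Ioc (0:ℝ) (δ/2) ∈ 𝓝[>] (0:ℝ) := Ioc_mem_nhdsGT_of_mem ⟨le_refl 0, hδ2⟩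
  filter_upwards [hmem] with x hx
  have hx' : x ∈ Icc (0:ℝ) (δ/2) := ⟨hx.1.le, hx.2⟩
  have htay : taylorWithinEval f 1 (Icc 0 (δ/2)) 0 x = a + b * x := by
    rw [taylor_within_apply]
    have hud : UniqueDiffWithinAt ℝ (Icc (0:ℝ) (δ/2)) 0 :=
      uniqueDiffOn_Icc hδ2 0 (left_mem_Icc.mpr hδ2.le)
    have hdiff : DifferentiableAt ℝ f 0 :=
      (hf.differentiableAt (by norm_num))
    have : derivWithin f (Icc (0:ℝ) (δ/2)) 0 = deriv f 0 := hdiff.derivWithin hud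
    simp [Finset.sum_range_succ, iteratedDerivWithin_zero, iteratedDerivWithin_one, this,
      h0, h1]
    ring
  have := hC x hx'
  rw [htay, sub_zero] at this
  simpa [abs_of_nonneg (sq_nonneg x), Real.norm_eq_abs] using this

noncomputable def nuf (c l m ε : ℝ) : ℝ := Real.sqrt ((c + ε*l)^2 + (ε*m)^2)

lemma nuf_zero (c l m : ℝ) (hc : 0 ≤ c) : nuf c l m 0 = c := by
  simp [nuf, Real.sqrt_sq hc]

lemma nuf_inner_hasDerivAt (c l m : ℝ) :
    HasDerivAt (fun ε : ℝ => (c + ε*l)^2 + (ε*m)^2) (2*c*l) 0 := by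
  have h1 : HasDerivAt (fun ε : ℝ => c + ε*l) l 0 := (hasDerivAt_mul_const l).const_add c
  have h2 : HasDerivAt (fun ε : ℝ => ε*m) m 0 := hasDerivAt_mul_const m
  have := (h1.pow 2).add (h2.pow 2)
  refine this.congr_deriv (Eq.symm ?_)
  norm_num

lemma nuf_hasDerivAt (c l m : ℝ) (hc : 0 < c) : HasDerivAt (nuf c l m) l 0 := by
  have hne : (c + 0*l)^2 + (0*m)^2 ≠ 0 := by simp; positivity
  have := (nuf_inner_hasDerivAt c l m).sqrt hne
  refine this.congr_deriv (Eq.symm ?_)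
  rw [show (c + 0*l)^2 + (0*m)^2 = c^2 by ring, Real.sqrt_sq hc.le]
  field_simp

lemma nuf_contDiffAt (c l m : ℝ) (hc : 0 < c) : ContDiffAt ℝ 2 (nuf c l m) 0 := by
  have hin : ContDiffAt ℝ 2 (fun ε : ℝ => (c + ε*l)^2 + (ε*m)^2) 0 := by fun_prop
  have hne : (c + 0*l)^2 + (0*m)^2 ≠ 0 := by simp; positivity
  exact hin.sqrt hne

variable {k₀ : ℝ}

/-- product of two nuf's at level k₀ : value and derivative -/
lemma nuprod_hasDerivAt (l1 m1 l2 m2 : ℝ) (hk : 0 < k₀) :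
    HasDerivAt (fun ε => nuf k₀ l1 m1 ε * nuf k₀ l2 m2 ε) (k₀*(l1+l2)) 0 := by
  have := (nuf_hasDerivAt k₀ l1 m1 hk).mul (nuf_hasDerivAt k₀ l2 m2 hk)
  refine this.congr_deriv (Eq.symm ?_)
  rw [nuf_zero _ _ _ hk.le, nuf_zero _ _ _ hk.le]; ring

noncomputable def ellfF (k₀ l1 m1 l2 m2 ε : ℝ) : ℝ :=
  (nuf k₀ l1 m1 ε * nuf k₀ l2 m2 ε + ((k₀+ε*l1)*(k₀+ε*l2) + (ε*m1)*(ε*m2))) /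
    Real.sqrt (nuf k₀ l1 m1 ε * nuf k₀ l2 m2 ε)

lemma nuprod_zero (l1 m1 l2 m2 : ℝ) (hk : 0 < k₀) :
    nuf k₀ l1 m1 0 * nuf k₀ l2 m2 0 = k₀^2 := by
  rw [nuf_zero _ _ _ hk.le, nuf_zero _ _ _ hk.le]; ring

lemma ellfF_zero (l1 m1 l2 m2 : ℝ) (hk : 0 < k₀) : ellfF k₀ l1 m1 l2 m2 0 = 2*k₀ := by
  rw [ellfF, nuprod_zero _ _ _ _ hk]
  rw [Real.sqrt_sq hk.le]
  field_simp
  ring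

lemma dot_hasDerivAt (c1 c2 l1 m1 l2 m2 : ℝ) :
    HasDerivAt (fun ε : ℝ => (c1+ε*l1)*(c2+ε*l2) + (ε*m1)*(ε*m2)) (c1*l2+c2*l1) 0 := by
  have h1 : HasDerivAt (fun ε : ℝ => c1 + ε*l1) l1 0 := (hasDerivAt_mul_const l1).const_add c1
  have h2 : HasDerivAt (fun ε : ℝ => c2 + ε*l2) l2 0 := (hasDerivAt_mul_const l2).const_add c2
  have h3 : HasDerivAt (fun ε : ℝ => ε*m1) m1 0 := hasDerivAt_mul_const m1
  have h4 : HasDerivAt (fun ε : ℝ => ε*m2) m2 0 := hasDerivAt_mul_const m2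
  have := (h1.mul h2).add (h3.mul h4)
  refine this.congr_deriv (Eq.symm ?_)
  ring

lemma ellfF_hasDerivAt (l1 m1 l2 m2 : ℝ) (hk : 0 < k₀) :
    HasDerivAt (ellfF k₀ l1 m1 l2 m2) (l1+l2) 0 := by
  have hP := nuprod_hasDerivAt l1 m1 l2 m2 hk
  have hD := dot_hasDerivAt k₀ k₀ l1 m1 l2 m2
  have hu := hP.add hD
  have hPne : nuf k₀ l1 m1 0 * nuf k₀ l2 m2 0 ≠ 0 := by
    rw [nuprod_zero _ _ _ _ hk]; positivity
  have hv := hP.sqrt hPne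
  have hvne : Real.sqrt (nuf k₀ l1 m1 0 * nuf k₀ l2 m2 0) ≠ 0 := by
    rw [nuprod_zero _ _ _ _ hk, Real.sqrt_sq hk.le]; exact hk.ne'
  have := hu.div hv hvne
  refine this.congr_deriv (Eq.symm ?_)
  simp only [Pi.add_apply, Pi.sub_apply, Pi.mul_apply, Pi.inv_apply]
  rw [nuprod_zero _ _ _ _ hk, Real.sqrt_sq hk.le]
  field_simp
  ring

noncomputable def ecoreF (k₀ l1 m1 l2 m2 ε : ℝ) : ℝ :=
  (nuf (2*k₀) (l1+l2) (m1+m2) ε * nuf k₀ l1 m1 ε -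
      ((2*k₀+ε*(l1+l2))*(k₀+ε*l1) + (ε*(m1+m2))*(ε*m1))) /
    Real.sqrt (nuf (2*k₀) (l1+l2) (m1+m2) ε * nuf k₀ l1 m1 ε)

lemma eprod_hasDerivAt (l1 m1 l2 m2 : ℝ) (hk : 0 < k₀) :
    HasDerivAt (fun ε => nuf (2*k₀) (l1+l2) (m1+m2) ε * nuf k₀ l1 m1 ε)
      ((l1+l2)*k₀ + 2*k₀*l1) 0 := by
  have h2k : (0:ℝ) < 2*k₀ := by linarith
  have := (nuf_hasDerivAt (2*k₀) (l1+l2) (m1+m2) h2k).mul (nuf_hasDerivAt k₀ l1 m1 hk)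
  refine this.congr_deriv (Eq.symm ?_)
  rw [nuf_zero _ _ _ hk.le, nuf_zero _ _ _ h2k.le]; try ring

lemma eprod_zero (l1 m1 l2 m2 : ℝ) (hk : 0 < k₀) :
    nuf (2*k₀) (l1+l2) (m1+m2) 0 * nuf k₀ l1 m1 0 = 2*k₀^2 := by
  have h2k : (0:ℝ) ≤ 2*k₀ := by linarith
  rw [nuf_zero _ _ _ hk.le, nuf_zero _ _ _ h2k]; ring

lemma ecoreF_zero (l1 m1 l2 m2 : ℝ) (hk : 0 < k₀) : ecoreF k₀ l1 m1 l2 m2 0 = 0 := by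
  rw [ecoreF, eprod_zero _ _ _ _ hk]
  have h : (2*k₀^2 - ((2*k₀+0*(l1+l2))*(k₀+0*l1) + (0*(m1+m2))*(0*m1))) = 0 := by ring
  rw [h, zero_div]

lemma ecoreF_hasDerivAt (l1 m1 l2 m2 : ℝ) (hk : 0 < k₀) :
    HasDerivAt (ecoreF k₀ l1 m1 l2 m2) 0 0 := by
  have hP := eprod_hasDerivAt l1 m1 l2 m2 hk
  have hD := dot_hasDerivAt (2*k₀) k₀ (l1+l2) (m1+m2) l1 m1
  have hu := hP.sub hD
  have hPne : nuf (2*k₀) (l1+l2) (m1+m2) 0 * nuf k₀ l1 m1 0 ≠ 0 := by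
    rw [eprod_zero _ _ _ _ hk]; positivity
  have hv := hP.sqrt hPne
  have hvne : Real.sqrt (nuf (2*k₀) (l1+l2) (m1+m2) 0 * nuf k₀ l1 m1 0) ≠ 0 := by
    rw [eprod_zero _ _ _ _ hk]; positivity
  have := hu.div hv hvne
  refine this.congr_deriv (Eq.symm ?_)
  simp only [Pi.add_apply, Pi.sub_apply, Pi.mul_apply, Pi.inv_apply]
  rw [eprod_zero _ _ _ _ hk]
  have hs : Real.sqrt (2*k₀^2) ≠ 0 := by positivity
  field_simp
  ring

noncomputable def WF (g k₀ l1 m1 l2 m2 ε : ℝ) : ℝ :=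
  Real.sqrt (g * nuf k₀ l1 m1 ε) + Real.sqrt (g * nuf k₀ l2 m2 ε) +
    Real.sqrt (g * nuf (2*k₀) (l1+l2) (m1+m2) ε)

lemma WF_zero {g : ℝ} (l1 m1 l2 m2 : ℝ) (hg : 0 < g) (hk : 0 < k₀) :
    WF g k₀ l1 m1 l2 m2 0 = Real.sqrt g * Real.sqrt k₀ * (2 + Real.sqrt 2) := by
  have h2k : (0:ℝ) ≤ 2*k₀ := by linarith
  rw [WF, nuf_zero _ _ _ hk.le, nuf_zero _ _ _ hk.le, nuf_zero _ _ _ h2k,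
    Real.sqrt_mul hg.le k₀, Real.sqrt_mul hg.le (2*k₀),
    Real.sqrt_mul (by norm_num : (0:ℝ) ≤ 2) k₀]
  ring

lemma WF_hasDerivAt {g : ℝ} (l1 m1 l2 m2 : ℝ) (hg : 0 < g) (hk : 0 < k₀) :
    HasDerivAt (fun ε => WF g k₀ l1 m1 l2 m2 ε)
      (Real.sqrt g * (l1+l2) * (2+Real.sqrt 2) / (4*Real.sqrt k₀)) 0 := by
  have h2k : (0:ℝ) < 2*k₀ := by linarith
  have hne1 : g * nuf k₀ l1 m1 0 ≠ 0 := by rw [nuf_zero _ _ _ hk.le]; positivity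
  have hne2 : g * nuf k₀ l2 m2 0 ≠ 0 := by rw [nuf_zero _ _ _ hk.le]; positivity
  have hne3 : g * nuf (2*k₀) (l1+l2) (m1+m2) 0 ≠ 0 := by
    rw [nuf_zero _ _ _ h2k.le]; positivity
  have h1 := (((nuf_hasDerivAt k₀ l1 m1 hk).const_mul g).sqrt hne1)
  have h2 := (((nuf_hasDerivAt k₀ l2 m2 hk).const_mul g).sqrt hne2)
  have h3 := (((nuf_hasDerivAt (2*k₀) (l1+l2) (m1+m2) h2k).const_mul g).sqrt hne3)
  have := (h1.add h2).add h3
  refine this.congr_deriv (Eq.symm ?_)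
  rw [nuf_zero _ _ _ hk.le, nuf_zero _ _ _ hk.le, nuf_zero _ _ _ h2k.le,
    Real.sqrt_mul hg.le k₀, Real.sqrt_mul hg.le (2*k₀),
    Real.sqrt_mul (by norm_num : (0:ℝ) ≤ 2) k₀]
  set sg := Real.sqrt g with hsgdef
  set r := Real.sqrt k₀ with hrdef
  set s2 := Real.sqrt 2 with hs2def
  have hsg : sg^2 = g := Real.sq_sqrt hg.le
  have hs2 : s2^2 = 2 := Real.sq_sqrt (by norm_num)
  have hsgpos : 0 < sg := Real.sqrt_pos.mpr hg
  have hrpos : 0 < r := Real.sqrt_pos.mpr hk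
  have hs2pos : 0 < s2 := Real.sqrt_pos.mpr (by norm_num)
  rw [← hsg]
  field_simp
  linear_combination (2*(l1+l2)) * hs2

noncomputable def P6F (k₀ l1 m1 l2 m2 l3 m3 l4 m4 ε : ℝ) : ℝ :=
  nuf k₀ l1 m1 ε * nuf k₀ l2 m2 ε * nuf k₀ l3 m3 ε * nuf k₀ l4 m4 ε *
    nuf (2*k₀) (l1+l2) (m1+m2) ε * nuf (2*k₀) (l3+l4) (m3+m4) ε

noncomputable def QF (k₀ l1 m1 l2 m2 l3 m3 l4 m4 ε : ℝ) : ℝ :=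
  Real.sqrt (Real.sqrt (P6F k₀ l1 m1 l2 m2 l3 m3 l4 m4 ε))

lemma P6F_zero (l1 m1 l2 m2 l3 m3 l4 m4 : ℝ) (hk : 0 < k₀) :
    P6F k₀ l1 m1 l2 m2 l3 m3 l4 m4 0 = 4*k₀^6 := by
  have h2k : (0:ℝ) ≤ 2*k₀ := by linarith
  rw [P6F, nuf_zero _ _ _ hk.le, nuf_zero _ _ _ hk.le, nuf_zero _ _ _ hk.le,
    nuf_zero _ _ _ hk.le, nuf_zero _ _ _ h2k, nuf_zero _ _ _ h2k]
  ring

lemma P6F_hasDerivAt (l1 m1 l2 m2 l3 m3 l4 m4 : ℝ) (hk : 0 < k₀) :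
    HasDerivAt (fun ε => P6F k₀ l1 m1 l2 m2 l3 m3 l4 m4 ε)
      (6*(l1+l2+l3+l4)*k₀^5) 0 := by
  have h2k : (0:ℝ) < 2*k₀ := by linarith
  have h := (((((nuf_hasDerivAt k₀ l1 m1 hk).mul (nuf_hasDerivAt k₀ l2 m2 hk)).mul
    (nuf_hasDerivAt k₀ l3 m3 hk)).mul (nuf_hasDerivAt k₀ l4 m4 hk)).mul
    (nuf_hasDerivAt (2*k₀) (l1+l2) (m1+m2) h2k)).mul
    (nuf_hasDerivAt (2*k₀) (l3+l4) (m3+m4) h2k)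
  refine h.congr_deriv (Eq.symm ?_)
  simp only [Pi.add_apply, Pi.sub_apply, Pi.mul_apply, Pi.inv_apply]
  rw [nuf_zero _ _ _ hk.le, nuf_zero _ _ _ hk.le, nuf_zero _ _ _ hk.le,
    nuf_zero _ _ _ hk.le, nuf_zero _ _ _ h2k.le, nuf_zero _ _ _ h2k.le]
  ring

lemma sqrtP6_zero (l1 m1 l2 m2 l3 m3 l4 m4 : ℝ) (hk : 0 < k₀) :
    Real.sqrt (P6F k₀ l1 m1 l2 m2 l3 m3 l4 m4 0) = 2*k₀^3 := by
  rw [P6F_zero _ _ _ _ _ _ _ _ hk, show (4:ℝ)*k₀^6 = (2*k₀^3)^2 by ring,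
    Real.sqrt_sq (by positivity)]

lemma hsqrt2k3 (hk : 0 < k₀) :
    Real.sqrt (2*k₀^3) = Real.sqrt 2*(k₀*Real.sqrt k₀) := by
  rw [show (2:ℝ)*k₀^3 = (Real.sqrt 2 * (k₀ * Real.sqrt k₀))^2 by
    rw [mul_pow, mul_pow, Real.sq_sqrt (by norm_num : (0:ℝ) ≤ 2),
      Real.sq_sqrt hk.le]; ring]
  exact Real.sqrt_sq (by positivity)

lemma QF_zero (l1 m1 l2 m2 l3 m3 l4 m4 : ℝ) (hk : 0 < k₀) :
    QF k₀ l1 m1 l2 m2 l3 m3 l4 m4 0 = Real.sqrt 2 * (k₀ * Real.sqrt k₀) := by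
  rw [QF, sqrtP6_zero _ _ _ _ _ _ _ _ hk, hsqrt2k3 hk]

lemma QF_hasDerivAt (l1 m1 l2 m2 l3 m3 l4 m4 : ℝ) (hk : 0 < k₀) :
    HasDerivAt (fun ε => QF k₀ l1 m1 l2 m2 l3 m3 l4 m4 ε)
      (3*(l1+l2+l3+l4)*k₀ / (4*(Real.sqrt 2 * Real.sqrt k₀))) 0 := by
  have hP := P6F_hasDerivAt l1 m1 l2 m2 l3 m3 l4 m4 hk
  have hPne : P6F k₀ l1 m1 l2 m2 l3 m3 l4 m4 0 ≠ 0 := by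
    rw [P6F_zero _ _ _ _ _ _ _ _ hk]; positivity
  have hs := hP.sqrt hPne
  have hsne : Real.sqrt (P6F k₀ l1 m1 l2 m2 l3 m3 l4 m4 0) ≠ 0 := by
    rw [sqrtP6_zero _ _ _ _ _ _ _ _ hk]; positivity
  have h := hs.sqrt hsne
  refine h.congr_deriv (Eq.symm ?_)
  rw [sqrtP6_zero _ _ _ _ _ _ _ _ hk, hsqrt2k3 hk]
  set r := Real.sqrt k₀ with hrdef
  set s2 := Real.sqrt 2 with hs2def
  have hr : r^2 = k₀ := Real.sq_sqrt hk.le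
  have hs2 : s2^2 = 2 := Real.sq_sqrt (by norm_num)
  have hrpos : 0 < r := Real.sqrt_pos.mpr hk
  have hs2pos : 0 < s2 := Real.sqrt_pos.mpr (by norm_num)
  rw [← hr]
  field_simp
  ring

lemma dot_contDiffAt (c1 c2 l1 m1 l2 m2 : ℝ) :
    ContDiffAt ℝ 2 (fun ε : ℝ => (c1+ε*l1)*(c2+ε*l2) + (ε*m1)*(ε*m2)) 0 := by fun_prop

lemma nuprod_contDiffAt (l1 m1 l2 m2 : ℝ) (hk : 0 < k₀) :
    ContDiffAt ℝ 2 (fun ε => nuf k₀ l1 m1 ε * nuf k₀ l2 m2 ε) 0 :=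
  (nuf_contDiffAt k₀ l1 m1 hk).mul (nuf_contDiffAt k₀ l2 m2 hk)

lemma ellfF_contDiffAt (l1 m1 l2 m2 : ℝ) (hk : 0 < k₀) :
    ContDiffAt ℝ 2 (ellfF k₀ l1 m1 l2 m2) 0 := by
  have hP := nuprod_contDiffAt l1 m1 l2 m2 hk
  have hPne : nuf k₀ l1 m1 0 * nuf k₀ l2 m2 0 ≠ 0 := by
    rw [nuprod_zero _ _ _ _ hk]; positivity
  have hvne : Real.sqrt (nuf k₀ l1 m1 0 * nuf k₀ l2 m2 0) ≠ 0 := by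
    rw [nuprod_zero _ _ _ _ hk, Real.sqrt_sq hk.le]; exact hk.ne'
  exact (hP.add (dot_contDiffAt k₀ k₀ l1 m1 l2 m2)).div (hP.sqrt hPne) hvne

lemma ecoreF_contDiffAt (l1 m1 l2 m2 : ℝ) (hk : 0 < k₀) :
    ContDiffAt ℝ 2 (ecoreF k₀ l1 m1 l2 m2) 0 := by
  have h2k : (0:ℝ) < 2*k₀ := by linarith
  have hP := (nuf_contDiffAt (2*k₀) (l1+l2) (m1+m2) h2k).mul (nuf_contDiffAt k₀ l1 m1 hk)
  have hPne : nuf (2*k₀) (l1+l2) (m1+m2) 0 * nuf k₀ l1 m1 0 ≠ 0 := by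
    rw [eprod_zero _ _ _ _ hk]; positivity
  have hvne : Real.sqrt (nuf (2*k₀) (l1+l2) (m1+m2) 0 * nuf k₀ l1 m1 0) ≠ 0 := by
    rw [eprod_zero _ _ _ _ hk]; positivity
  exact (hP.sub (dot_contDiffAt (2*k₀) k₀ (l1+l2) (m1+m2) l1 m1)).div (hP.sqrt hPne) hvne

lemma WF_contDiffAt {g : ℝ} (l1 m1 l2 m2 : ℝ) (hg : 0 < g) (hk : 0 < k₀) :
    ContDiffAt ℝ 2 (fun ε => WF g k₀ l1 m1 l2 m2 ε) 0 := by
  have h2k : (0:ℝ) < 2*k₀ := by linarith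
  have hne1 : g * nuf k₀ l1 m1 0 ≠ 0 := by rw [nuf_zero _ _ _ hk.le]; positivity
  have hne2 : g * nuf k₀ l2 m2 0 ≠ 0 := by rw [nuf_zero _ _ _ hk.le]; positivity
  have hne3 : g * nuf (2*k₀) (l1+l2) (m1+m2) 0 ≠ 0 := by
    rw [nuf_zero _ _ _ h2k.le]; positivity
  exact ((((contDiffAt_const (c := g)).mul (nuf_contDiffAt k₀ l1 m1 hk)).sqrt hne1).add
    (((contDiffAt_const (c := g)).mul (nuf_contDiffAt k₀ l2 m2 hk)).sqrt hne2)).add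
    (((contDiffAt_const (c := g)).mul (nuf_contDiffAt (2*k₀) (l1+l2) (m1+m2) h2k)).sqrt hne3)

lemma WF_pos {g : ℝ} (l1 m1 l2 m2 : ℝ) (hg : 0 < g) (hk : 0 < k₀) :
    WF g k₀ l1 m1 l2 m2 0 ≠ 0 := by
  rw [WF_zero _ _ _ _ hg hk]
  have h1 : 0 < Real.sqrt g := Real.sqrt_pos.mpr hg
  have h2 : 0 < Real.sqrt k₀ := Real.sqrt_pos.mpr hk
  have h3 : 0 < Real.sqrt 2 := Real.sqrt_pos.mpr (by norm_num)
  positivity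

lemma QF_contDiffAt (l1 m1 l2 m2 l3 m3 l4 m4 : ℝ) (hk : 0 < k₀) :
    ContDiffAt ℝ 2 (fun ε => QF k₀ l1 m1 l2 m2 l3 m3 l4 m4 ε) 0 := by
  have h2k : (0:ℝ) < 2*k₀ := by linarith
  have hP : ContDiffAt ℝ 2 (fun ε => P6F k₀ l1 m1 l2 m2 l3 m3 l4 m4 ε) 0 :=
    (((((nuf_contDiffAt k₀ l1 m1 hk).mul (nuf_contDiffAt k₀ l2 m2 hk)).mul
      (nuf_contDiffAt k₀ l3 m3 hk)).mul (nuf_contDiffAt k₀ l4 m4 hk)).mul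
      (nuf_contDiffAt (2*k₀) (l1+l2) (m1+m2) h2k)).mul
      (nuf_contDiffAt (2*k₀) (l3+l4) (m3+m4) h2k)
  have hPne : P6F k₀ l1 m1 l2 m2 l3 m3 l4 m4 0 ≠ 0 := by
    rw [P6F_zero _ _ _ _ _ _ _ _ hk]; positivity
  have hsne : Real.sqrt (P6F k₀ l1 m1 l2 m2 l3 m3 l4 m4 0) ≠ 0 := by
    rw [sqrtP6_zero _ _ _ _ _ _ _ _ hk]; positivity
  exact (hP.sqrt hPne).sqrt hsne

noncomputable def GF (g k₀ l1 m1 l2 m2 l3 m3 l4 m4 ε : ℝ) : ℝ :=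
  Real.sqrt g / (128 * Real.pi ^ 2) * QF k₀ l1 m1 l2 m2 l3 m3 l4 m4 ε *
    (ellfF k₀ l1 m1 l2 m2 ε + ecoreF k₀ l1 m1 l2 m2 ε + ecoreF k₀ l2 m2 l1 m1 ε) *
    (ellfF k₀ l3 m3 l4 m4 ε + ecoreF k₀ l3 m3 l4 m4 ε + ecoreF k₀ l4 m4 l3 m3 ε) *
    ((WF g k₀ l1 m1 l2 m2 ε)⁻¹ + (WF g k₀ l3 m3 l4 m4 ε)⁻¹)

lemma GF_contDiffAt {g : ℝ} (l1 m1 l2 m2 l3 m3 l4 m4 : ℝ) (hg : 0 < g) (hk : 0 < k₀) :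
    ContDiffAt ℝ 2 (GF g k₀ l1 m1 l2 m2 l3 m3 l4 m4) 0 := by
  have hB1 := ((ellfF_contDiffAt l1 m1 l2 m2 hk).add (ecoreF_contDiffAt l1 m1 l2 m2 hk)).add
    (ecoreF_contDiffAt l2 m2 l1 m1 hk)
  have hB2 := ((ellfF_contDiffAt l3 m3 l4 m4 hk).add (ecoreF_contDiffAt l3 m3 l4 m4 hk)).add
    (ecoreF_contDiffAt l4 m4 l3 m3 hk)
  have hR := ((WF_contDiffAt l1 m1 l2 m2 hg hk).inv (WF_pos l1 m1 l2 m2 hg hk)).add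
    ((WF_contDiffAt l3 m3 l4 m4 hg hk).inv (WF_pos l3 m3 l4 m4 hg hk))
  exact ((((contDiffAt_const.mul (QF_contDiffAt l1 m1 l2 m2 l3 m3 l4 m4 hk)).mul hB1).mul
    hB2).mul hR : )

lemma GF_zero {g : ℝ} (l1 m1 l2 m2 l3 m3 l4 m4 : ℝ) (hg : 0 < g) (hk : 0 < k₀) :
    GF g k₀ l1 m1 l2 m2 l3 m3 l4 m4 0 =
      (Real.sqrt 2 - 1) * (k₀^3 / (16 * Real.pi^2)) := by
  rw [GF, QF_zero _ _ _ _ _ _ _ _ hk, ellfF_zero _ _ _ _ hk, ellfF_zero _ _ _ _ hk,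
    ecoreF_zero _ _ _ _ hk, ecoreF_zero _ _ _ _ hk, ecoreF_zero _ _ _ _ hk,
    ecoreF_zero _ _ _ _ hk, WF_zero _ _ _ _ hg hk, WF_zero _ _ _ _ hg hk]
  set sg := Real.sqrt g with hsgdef
  set r := Real.sqrt k₀ with hrdef
  set s2 := Real.sqrt 2 with hs2def
  have hsg : sg^2 = g := Real.sq_sqrt hg.le
  have hr : r^2 = k₀ := Real.sq_sqrt hk.le
  have hs2 : s2^2 = 2 := Real.sq_sqrt (by norm_num)
  have hsgpos : 0 < sg := Real.sqrt_pos.mpr hg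
  have hrpos : 0 < r := Real.sqrt_pos.mpr hk
  have hs2pos : 0 < s2 := Real.sqrt_pos.mpr (by norm_num)
  have hpi : Real.pi ≠ 0 := Real.pi_ne_zero
  have h2s2 : sg * r * (2 + s2) ≠ 0 := by positivity
  rw [← hr]
  field_simp
  linear_combination (-(128*r^4)) * hs2

lemma GF_hasDerivAt {g : ℝ} (l1 m1 l2 m2 l3 m3 l4 m4 : ℝ) (hg : 0 < g) (hk : 0 < k₀) :
    HasDerivAt (GF g k₀ l1 m1 l2 m2 l3 m3 l4 m4)
      ((Real.sqrt 2 - 1) * (k₀^3 / (16 * Real.pi^2)) * (3*(l1+l2+l3+l4)/(4*k₀))) 0 := by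
  have hB1 := ((ellfF_hasDerivAt l1 m1 l2 m2 hk).add (ecoreF_hasDerivAt l1 m1 l2 m2 hk)).add
    (ecoreF_hasDerivAt l2 m2 l1 m1 hk)
  have hB2 := ((ellfF_hasDerivAt l3 m3 l4 m4 hk).add (ecoreF_hasDerivAt l3 m3 l4 m4 hk)).add
    (ecoreF_hasDerivAt l4 m4 l3 m3 hk)
  have hR := ((WF_hasDerivAt l1 m1 l2 m2 hg hk).inv (WF_pos l1 m1 l2 m2 hg hk)).add
    ((WF_hasDerivAt l3 m3 l4 m4 hg hk).inv (WF_pos l3 m3 l4 m4 hg hk))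
  have h := ((((QF_hasDerivAt l1 m1 l2 m2 l3 m3 l4 m4 hk).const_mul
    (Real.sqrt g / (128 * Real.pi ^ 2))).mul hB1).mul hB2).mul hR
  have hGF : GF g k₀ l1 m1 l2 m2 l3 m3 l4 m4 = fun ε =>
      Real.sqrt g / (128 * Real.pi ^ 2) * QF k₀ l1 m1 l2 m2 l3 m3 l4 m4 ε *
        (ellfF k₀ l1 m1 l2 m2 ε + ecoreF k₀ l1 m1 l2 m2 ε + ecoreF k₀ l2 m2 l1 m1 ε) *
        (ellfF k₀ l3 m3 l4 m4 ε + ecoreF k₀ l3 m3 l4 m4 ε + ecoreF k₀ l4 m4 l3 m3 ε) *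
        ((WF g k₀ l1 m1 l2 m2 ε)⁻¹ + (WF g k₀ l3 m3 l4 m4 ε)⁻¹) := rfl
  rw [hGF]
  refine h.congr_deriv (Eq.symm ?_)
  simp only [Pi.add_apply, Pi.sub_apply, Pi.mul_apply, Pi.inv_apply]
  rw [QF_zero _ _ _ _ _ _ _ _ hk, ellfF_zero _ _ _ _ hk, ellfF_zero _ _ _ _ hk,
    ecoreF_zero _ _ _ _ hk, ecoreF_zero _ _ _ _ hk, ecoreF_zero _ _ _ _ hk,
    ecoreF_zero _ _ _ _ hk, WF_zero _ _ _ _ hg hk, WF_zero _ _ _ _ hg hk]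
  set sg := Real.sqrt g with hsgdef
  set r := Real.sqrt k₀ with hrdef
  set s2 := Real.sqrt 2 with hs2def
  have hsg : sg^2 = g := Real.sq_sqrt hg.le
  have hr : r^2 = k₀ := Real.sq_sqrt hk.le
  have hs2 : s2^2 = 2 := Real.sq_sqrt (by norm_num)
  have hsgpos : 0 < sg := Real.sqrt_pos.mpr hg
  have hrpos : 0 < r := Real.sqrt_pos.mpr hk
  have hs2pos : 0 < s2 := Real.sqrt_pos.mpr (by norm_num)
  have hpi : Real.pi ≠ 0 := Real.pi_ne_zero
  have h2s2 : sg * r * (2 + s2) ≠ 0 := by positivity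
  rw [← hr]
  field_simp
  linear_combination (r^4*(l1+l2+l3+l4)*(384*s2+192)) * hs2

lemma rpow_quarter (x : ℝ) (hx : 0 ≤ x) :
    x ^ ((1:ℝ)/4) = Real.sqrt (Real.sqrt x) := by
  rw [Real.sqrt_eq_rpow, Real.sqrt_eq_rpow, ← Real.rpow_mul hx]
  norm_num

set_option maxHeartbeats 2000000 in
lemma coefI_eq_GF (g k₀ : ℝ) (χ₁ χ₂ χ₃ χ₄ : ℝ × ℝ) (ε : ℝ) :
    coefI g ((k₀, 0) + ε • χ₁) ((k₀, 0) + ε • χ₂)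
        (-((k₀, 0) + ε • χ₃)) (-((k₀, 0) + ε • χ₄)) =
      GF g k₀ χ₁.1 χ₁.2 χ₂.1 χ₂.2 χ₃.1 χ₃.2 χ₄.1 χ₄.2 ε := by
  obtain ⟨l1, m1⟩ := χ₁
  obtain ⟨l2, m2⟩ := χ₂
  obtain ⟨l3, m3⟩ := χ₃
  obtain ⟨l4, m4⟩ := χ₄
  simp only [coefI, GF, QF, P6F, ellfF, ecoreF, WF, nuf, ell, omg, norm2, dot,
    Prod.smul_mk, smul_eq_mul, Prod.mk_add_mk, Prod.neg_mk, Prod.fst_add, Prod.snd_add]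
  rw [rpow_quarter _ (by positivity)]
  simp only [one_div]
  set_option maxRecDepth 100000 in
  ring_nf

/-- Modulational expansion of the coefficient I. -/
theorem coefI_modulational_expansion (g k₀ : ℝ) (hg : 0 < g) (hk₀ : 0 < k₀)
    (χ₁ χ₂ χ₃ χ₄ : ℝ × ℝ) :
    (fun ε : ℝ =>
        coefI g ((k₀, 0) + ε • χ₁) ((k₀, 0) + ε • χ₂)
            (-((k₀, 0) + ε • χ₃)) (-((k₀, 0) + ε • χ₄))
          - (Real.sqrt 2 - 1) * (k₀ ^ 3 / (16 * Real.pi ^ 2)) *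
            (1 + 3 * ε / (4 * k₀) * (χ₁.1 + χ₂.1 + χ₃.1 + χ₄.1)))
      =O[𝓝[>] (0 : ℝ)] fun ε => ε ^ 2 := by
  set l1 := χ₁.1; set m1 := χ₁.2; set l2 := χ₂.1; set m2 := χ₂.2
  set l3 := χ₃.1; set m3 := χ₃.2; set l4 := χ₄.1; set m4 := χ₄.2
  have hcd := GF_contDiffAt (k₀ := k₀) (g := g) l1 m1 l2 m2 l3 m3 l4 m4 hg hk₀
  have h0 := GF_zero (k₀ := k₀) (g := g) l1 m1 l2 m2 l3 m3 l4 m4 hg hk₀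
  have h1 := (GF_hasDerivAt (k₀ := k₀) (g := g) l1 m1 l2 m2 l3 m3 l4 m4 hg hk₀).deriv
  have h := taylor2_bigO hcd h0 h1
  have heq : (fun ε : ℝ =>
      coefI g ((k₀, 0) + ε • χ₁) ((k₀, 0) + ε • χ₂)
          (-((k₀, 0) + ε • χ₃)) (-((k₀, 0) + ε • χ₄))
        - (Real.sqrt 2 - 1) * (k₀ ^ 3 / (16 * Real.pi ^ 2)) *
          (1 + 3 * ε / (4 * k₀) * (χ₁.1 + χ₂.1 + χ₃.1 + χ₄.1)))
      = fun ε : ℝ => GF g k₀ l1 m1 l2 m2 l3 m3 l4 m4 ε -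
          ((Real.sqrt 2 - 1) * (k₀ ^ 3 / (16 * Real.pi ^ 2)) +
            (Real.sqrt 2 - 1) * (k₀ ^ 3 / (16 * Real.pi ^ 2)) *
              (3 * (l1 + l2 + l3 + l4) / (4 * k₀)) * ε) := by
    funext ε
    rw [coefI_eq_GF]
    ring
  rw [heq]
  exact h
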